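/- Every nonempty standard-form polyhedron P = {x ∈ ℝ^n : A x = b and x ≥ 0} has at least one extreme point: there exists x ∈ Set.extremePoints ℝ P. -/

import Mathlib

/-- Every nonempty standard-form polyhedron `P = {x | A x = b ∧ x ≥ 0}`
has at least one extreme point. -/
theorem standardForm_polyhedron_has_extremePoint (m n : ℕ)
    (A : Matrix (Fin m) (Fin n) ℝ) (b : Fin m → ℝ) (P : Set (Fin n → ℝ))
    (hP : P = {x : Fin n → ℝ | A.mulVec x = b ∧ ∀ j, 0 ≤ x j})
    (hne : P.Nonempty) :
    ∃ x : Fin n → ℝ, x ∈ Set.extremePoints ℝ P := by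
  classical
  obtain ⟨x0, hx0⟩ := hne
  set f : (Fin n → ℝ) → ℝ := fun x => ∑ j, x j with hf
  have hfcont : Continuous f := continuous_finset_sum _ fun j _ => continuous_apply j
  -- every coordinate of a point of P is bounded by f
  have hcoord : ∀ x ∈ P, ∀ j, x j ≤ f x := by
    intro x hx j
    rw [hP] at hx
    exact Finset.single_le_sum (fun i _ => hx.2 i) (Finset.mem_univ j)
  have hfnonneg : ∀ x ∈ P, 0 ≤ f x := by
    intro x hx
    rw [hP] at hx
    exact Finset.sum_nonneg fun i _ => hx.2 i
  -- P is closed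
  have hPclosed : IsClosed P := by
    rw [hP]
    have h1 : IsClosed {x : Fin n → ℝ | A.mulVec x = b} := by
      have : Continuous fun x : Fin n → ℝ => A.mulVec x := by
        continuity
      exact isClosed_eq this continuous_const
    have h2 : IsClosed {x : Fin n → ℝ | ∀ j, 0 ≤ x j} := by
      have : {x : Fin n → ℝ | ∀ j, 0 ≤ x j} = ⋂ j, {x | 0 ≤ x j} :=
        Set.ext fun x => by simp
      rw [this]
      exact isClosed_iInter fun j => isClosed_le continuous_const (continuous_apply j)
    exact h1.inter h2
  -- the sublevel set S is compact
  set S : Set (Fin n → ℝ) := P ∩ {x | f x ≤ f x0} with hS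
  have hSsub : S ⊆ Set.Icc (0 : Fin n → ℝ) (fun _ => f x0) := by
    intro x hx
    have hxP := hx.1
    rw [hP] at hxP
    constructor
    · intro j
      simpa using hxP.2 j
    · intro j
      exact le_trans (hcoord x hx.1 j) hx.2
  have hSclosed : IsClosed S := hPclosed.inter (isClosed_le hfcont continuous_const)
  have hScompact : IsCompact S :=
    IsCompact.of_isClosed_subset isCompact_Icc hSclosed hSsub
  have hSne : S.Nonempty := ⟨x0, hx0, le_refl (f x0)⟩
  -- f attains its minimum on S
  obtain ⟨xm, hxmS, hxmmin⟩ := hScompact.exists_isMinOn hSne hfcont.continuousOn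
  -- xm minimizes f on all of P
  have hminP : ∀ x ∈ P, f xm ≤ f x := by
    intro x hx
    by_cases h : f x ≤ f x0
    · exact hxmmin ⟨hx, h⟩
    · exact le_trans (hxmmin ⟨hx0, le_refl (f x0)⟩) (le_of_not_ge h)
  -- the argmin face F
  set F : Set (Fin n → ℝ) := {x ∈ P | f x = f xm} with hF
  have hFS : F ⊆ S := by
    intro x hx
    refine ⟨hx.1, ?_⟩
    show f x ≤ f x0
    rw [hx.2]
    exact hxmmin ⟨hx0, le_refl (f x0)⟩
  have hFclosed : IsClosed F := hPclosed.inter (isClosed_eq hfcont continuous_const)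
  have hFcompact : IsCompact F := IsCompact.of_isClosed_subset hScompact hFclosed hFS
  have hFne : F.Nonempty := ⟨xm, hxmS.1, rfl⟩
  -- F is an extreme subset of P
  have hext : IsExtreme ℝ P F := by
    constructor
    · exact fun x hx => hx.1
    · rintro x1 hx1 x2 hx2 x hxF hx
      rw [openSegment_eq_image] at hx
      obtain ⟨t, ⟨ht0, ht1⟩, rfl⟩ := hx
      have hflin : f ((1 - t) • x1 + t • x2) = (1 - t) * f x1 + t * f x2 := by
        simp only [hf, Pi.add_apply, Pi.smul_apply, smul_eq_mul]
        rw [Finset.sum_add_distrib, Finset.mul_sum, Finset.mul_sum]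
      have h1 : f xm ≤ f x1 := hminP x1 hx1
      have h2 : f xm ≤ f x2 := hminP x2 hx2
      have heq : (1 - t) * f x1 + t * f x2 = f xm := by
        rw [← hflin]; exact hxF.2
      have hx1eq : f x1 = f xm := by nlinarith
      have hx2eq : f x2 = f xm := by nlinarith
      exact ⟨hx1, hx1eq⟩
  -- Krein-Milman lemma gives an extreme point of F, which is extreme in P
  obtain ⟨y, hy⟩ := hFcompact.extremePoints_nonempty hFne
  exact ⟨y, hext.extremePoints_subset_extremePoints hy⟩
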